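/- If G is a graph of order n with minimum degree δ(G) = 0 (i.e., G has an isolated vertex), then the coalition number C(G) equals n if and only if G is isomorphic to the disjoint union K_1 ∪ K_{n-1} of an isolated vertex and a complete graph on n-1 vertices. -/

import Mathlib

open SimpleGraph

attribute [local instance] Classical.propDecidable

def Dominates {V : Type*} (G : SimpleGraph V) (S : Set V) : Prop :=
  ∀ v, v ∉ S → ∃ u ∈ S, G.Adj u v

def Coalition {V : Type*} (G : SimpleGraph V) (A B : Set V) : Prop :=
  Disjoint A B ∧ ¬ Dominates G A ∧ ¬ Dominates G B ∧ Dominates G (A ∪ B)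

def IsCoalitionPartition {V : Type*} (G : SimpleGraph V) (P : Finset (Set V)) : Prop :=
  (∀ A ∈ P, A.Nonempty) ∧
  (∀ A ∈ P, ∀ B ∈ P, A ≠ B → Disjoint A B) ∧
  (∀ v : V, ∃ A ∈ P, v ∈ A) ∧
  (∀ A ∈ P, (Dominates G A ∧ ∃ v, A = {v}) ∨
    (¬ Dominates G A ∧ ∃ B ∈ P, B ≠ A ∧ Coalition G A B))

noncomputable def coalitionNumber {V : Type*} (G : SimpleGraph V) : ℕ :=
  sSup {n | ∃ P : Finset (Set V), IsCoalitionPartition G P ∧ P.card = n}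

def coalitionGraph {V : Type*} (G : SimpleGraph V) (P : Finset (Set V)) :
    SimpleGraph {A : Set V // A ∈ P} where
  Adj A B := Coalition G A.1 B.1
  symm := by
    constructor
    rintro A B ⟨d, na, nb, u⟩
    exact ⟨d.symm, nb, na, by rwa [Set.union_comm]⟩
  loopless := by
    constructor
    rintro ⟨A, hA⟩ ⟨d, na, nb, u⟩
    rw [Set.union_self] at u
    exact na u

/-- `K_1 ∪ K_{n-1}`: vertex `0` is isolated, all other vertices are mutually adjacent. -/
def K1UnionComplete (n : ℕ) : SimpleGraph (Fin n) where
  Adj a b := a ≠ b ∧ a.val ≠ 0 ∧ b.val ≠ 0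
  symm := by constructor; rintro a b ⟨h1, h2, h3⟩; exact ⟨h1.symm, h3, h2⟩
  loopless := by constructor; rintro a ⟨h, -, -⟩; exact h rfl

lemma card_le_of_cp {V : Type*} [Fintype V] (G : SimpleGraph V) {P : Finset (Set V)}
    (hP : IsCoalitionPartition G P) : P.card ≤ Fintype.card V := by
  classical
  obtain ⟨hne, hdis, -, -⟩ := hP
  have hf : ∀ A : {A // A ∈ P}, ∃ v, v ∈ A.1 := fun A => hne A.1 A.2
  choose f hfmem using hf
  have hinj : Function.Injective f := by
    intro A B hAB
    by_contra hne'
    have : Disjoint A.1 B.1 := hdis A.1 A.2 B.1 B.2 (fun h => hne' (Subtype.ext h))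
    exact (Set.disjoint_left.mp this (hfmem A)) (hAB ▸ hfmem B)
  calc P.card = Fintype.card {A // A ∈ P} := (Fintype.card_coe P).symm
    _ ≤ Fintype.card V := Fintype.card_le_of_injective f hinj
theorem stmt0 {V : Type*} [Fintype V] [Nonempty V] (G : SimpleGraph V)
    (hδ : G.minDegree = 0) :
    coalitionNumber G = Fintype.card V ↔
      Nonempty (G ≃g K1UnionComplete (Fintype.card V)) := by
  classical
  have hnpos : 0 < Fintype.card V := Fintype.card_pos
  obtain ⟨w, hw⟩ := G.exists_minimal_degree_vertex
  have hwdeg : G.degree w = 0 := by rw [← hw, hδ]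
  have hwiso : ∀ u, ¬ G.Adj w u := by
    intro u hu
    have h1 : u ∈ G.neighborFinset w := (G.mem_neighborFinset w u).mpr hu
    rw [Finset.card_eq_zero.mp hwdeg] at h1
    exact absurd h1 (Finset.notMem_empty u)
  have hdomw : ∀ S : Set V, Dominates G S → w ∈ S := by
    intro S hS
    by_contra h
    obtain ⟨u, _, hadj⟩ := hS w h
    exact hwiso u hadj.symm
  constructor
  · -- forward direction
    intro hC
    set S := {n | ∃ P : Finset (Set V), IsCoalitionPartition G P ∧ P.card = n} with hS
    have hbdd : BddAbove S := by
      refine ⟨Fintype.card V, ?_⟩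
      rintro m ⟨Q, hQ, rfl⟩
      exact card_le_of_cp G hQ
    have hSne : S.Nonempty := by
      by_contra h
      rw [Set.not_nonempty_iff_eq_empty] at h
      have : coalitionNumber G = 0 := by
        rw [coalitionNumber, ← hS, h]; exact csSup_empty
      omega
    have hmem : Fintype.card V ∈ S := by
      rw [← hC]; exact Nat.sSup_mem hSne hbdd
    obtain ⟨P, hP, hcard⟩ := hmem
    obtain ⟨hne, hdis, hcov, hdom⟩ := hP
    -- classes
    choose cl hclP hclmem using hcov
    have hcluniq : ∀ v (A : Set V), A ∈ P → v ∈ A → A = cl v := by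
      intro v A hA hvA
      by_contra h
      exact Set.disjoint_left.mp (hdis A hA (cl v) (hclP v) h) hvA (hclmem v)
    have gsurj : Function.Surjective (fun v => (⟨cl v, hclP v⟩ : {A // A ∈ P})) := by
      rintro ⟨A, hA⟩
      obtain ⟨a, ha⟩ := hne A hA
      exact ⟨a, Subtype.ext (hcluniq a A hA ha).symm⟩
    have gbij : Function.Bijective (fun v => (⟨cl v, hclP v⟩ : {A // A ∈ P})) := by
      rw [Fintype.bijective_iff_surjective_and_card]
      exact ⟨gsurj, by rw [Fintype.card_coe, hcard]⟩
    have hsingle : ∀ v, cl v = {v} := by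
      intro v
      apply Set.eq_singleton_iff_unique_mem.mpr
      refine ⟨hclmem v, fun u hu => ?_⟩
      have : cl u = cl v := (hcluniq u (cl v) (hclP v) hu).symm
      exact gbij.1 (Subtype.ext this)
    have hmemP : ∀ A ∈ P, ∃ v, A = {v} := by
      intro A hA
      obtain ⟨a, ha⟩ := hne A hA
      exact ⟨a, (hcluniq a A hA ha).trans (hsingle a)⟩
    have hsingP : ∀ v : V, ({v} : Set V) ∈ P := by
      intro v
      have := hclP v
      rwa [hsingle v] at this
    -- adjacency characterization
    have hadjchar : ∀ a b : V, G.Adj a b ↔ (a ≠ b ∧ a ≠ w ∧ b ≠ w) := by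
      intro a b
      constructor
      · intro h
        refine ⟨h.ne, ?_, ?_⟩
        · rintro rfl; exact hwiso b h
        · rintro rfl; exact hwiso a h.symm
      · rintro ⟨hab, haw, hbw⟩
        rcases hdom {a} (hsingP a) with ⟨hd, -⟩ | ⟨-, B, hB, -, -, -, -, hdun⟩
        · exact absurd (hdomw _ hd) (by simpa [eq_comm] using haw)
        · obtain ⟨u, rfl⟩ := hmemP B hB
          have hwu : w ∈ ({a} : Set V) ∪ {u} := hdomw _ hdun
          have hu : u = w := by
            rcases hwu with h | h
            · exact absurd h.symm (by simpa using haw)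
            · exact (Set.mem_singleton_iff.mp h).symm
          subst hu
          have hb : b ∉ ({a} : Set V) ∪ {u} := by
            rintro (h | h)
            · exact hab (Set.mem_singleton_iff.mp h).symm
            · exact hbw (Set.mem_singleton_iff.mp h)
          obtain ⟨x, hx, hxb⟩ := hdun b hb
          rcases hx with h | h
          · rwa [Set.mem_singleton_iff.mp h] at hxb
          · rw [Set.mem_singleton_iff.mp h] at hxb
            exact absurd hxb (hwiso b)
    -- build iso
    let z : Fin (Fintype.card V) := ⟨0, hnpos⟩
    let e : V ≃ Fin (Fintype.card V) := (Fintype.equivFin V).trans (Equiv.swap ((Fintype.equivFin V) w) z)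
    have hew : e w = z := by simp [e, Equiv.swap_apply_left]
    have heeq : ∀ a : V, (e a).val = 0 ↔ a = w := by
      intro a
      constructor
      · intro h
        have : e a = z := Fin.ext h
        exact e.injective (this.trans hew.symm)
      · rintro rfl; rw [hew]
    refine ⟨⟨e, ?_⟩⟩
    intro a b
    show (e a ≠ e b ∧ (e a).val ≠ 0 ∧ (e b).val ≠ 0) ↔ G.Adj a b
    rw [hadjchar a b, ne_eq, e.apply_eq_iff_eq]
    constructor
    · rintro ⟨h1, h2, h3⟩
      exact ⟨h1, fun h => h2 ((heeq a).mpr h), fun h => h3 ((heeq b).mpr h)⟩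
    · rintro ⟨h1, h2, h3⟩
      exact ⟨h1, fun h => h2 ((heeq a).mp h), fun h => h3 ((heeq b).mp h)⟩
  · -- backward direction
    rintro ⟨f⟩
    let z : Fin (Fintype.card V) := ⟨0, hnpos⟩
    let w' : V := f.symm z
    have hadjchar : ∀ a b : V, G.Adj a b ↔ (a ≠ b ∧ a ≠ w' ∧ b ≠ w') := by
      intro a b
      rw [← f.map_adj_iff]
      show (f a ≠ f b ∧ (f a).val ≠ 0 ∧ (f b).val ≠ 0) ↔ _
      have hval : ∀ c : V, (f c).val = 0 ↔ c = w' := by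
        intro c
        constructor
        · intro h
          have : f c = z := Fin.ext h
          have := congrArg f.symm this
          simpa [w'] using this
        · rintro rfl
          simp [w', z]
      constructor
      · rintro ⟨h1, h2, h3⟩
        exact ⟨fun h => h1 (by rw [h]), fun h => h2 ((hval a).mpr h),
          fun h => h3 ((hval b).mpr h)⟩
      · rintro ⟨h1, h2, h3⟩
        exact ⟨fun h => h1 (f.toEquiv.injective h), fun h => h2 ((hval a).mp h),
          fun h => h3 ((hval b).mp h)⟩
    -- singleton partition
    let P : Finset (Set V) := Finset.univ.image (fun v => ({v} : Set V))
    have hmemP : ∀ A : Set V, A ∈ P ↔ ∃ v, A = {v} := by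
      intro A
      simp [P, eq_comm]
    have hcard : P.card = Fintype.card V := by
      rw [Finset.card_image_of_injective _ Set.singleton_injective, Finset.card_univ]
    have hndom : ∀ a b : V, a ≠ b → ¬ Dominates G {a} := by
      intro a b hab hd
      by_cases haw : a = w'
      · obtain ⟨x, hx, hadj⟩ := hd b (fun h => hab (Set.mem_singleton_iff.mp h).symm)
        rw [Set.mem_singleton_iff.mp hx] at hadj
        exact ((hadjchar a b).mp hadj).2.1 haw
      · obtain ⟨x, hx, hadj⟩ := hd w' (fun h => haw (Set.mem_singleton_iff.mp h).symm)
        rw [Set.mem_singleton_iff.mp hx] at hadj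
        exact ((hadjchar a w').mp hadj).2.2 rfl
    have hP : IsCoalitionPartition G P := by
      refine ⟨?_, ?_, ?_, ?_⟩
      · intro A hA
        obtain ⟨v, rfl⟩ := (hmemP A).mp hA
        exact ⟨v, rfl⟩
      · intro A hA B hB hAB
        obtain ⟨a, rfl⟩ := (hmemP A).mp hA
        obtain ⟨b, rfl⟩ := (hmemP B).mp hB
        simpa using fun h => hAB (by rw [h])
      · intro v
        exact ⟨{v}, (hmemP _).mpr ⟨v, rfl⟩, rfl⟩
      · intro A hA
        obtain ⟨v, rfl⟩ := (hmemP A).mp hA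
        by_cases hv : ∀ u : V, u = v
        · left
          refine ⟨fun u hu => absurd (hv u) (by simpa using hu), v, rfl⟩
        · push_neg at hv
          obtain ⟨u, huv⟩ := hv
          right
          rcases eq_or_ne v w' with rfl | hvw
          · have hBmem : ({u} : Set V) ∈ P := (hmemP _).mpr ⟨u, rfl⟩
            have hBne : ({u} : Set V) ≠ {w'} := by simpa using huv
            have hdisj : Disjoint ({w'} : Set V) {u} := by simpa using Ne.symm huv
            have hdun : Dominates G (({w'} : Set V) ∪ {u}) := by
              intro x hx
              simp only [Set.mem_union, Set.mem_singleton_iff] at hx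
              push_neg at hx
              exact ⟨u, Or.inr rfl, (hadjchar u x).mpr ⟨fun h => hx.2 h.symm, huv, hx.1⟩⟩
            exact ⟨hndom w' u (Ne.symm huv), {u}, hBmem, hBne, hdisj, hndom w' u (Ne.symm huv), hndom u w' huv, hdun⟩
          · have hBmem : ({w'} : Set V) ∈ P := (hmemP _).mpr ⟨w', rfl⟩
            have hBne : ({w'} : Set V) ≠ {v} := by simpa using Ne.symm hvw
            have hdisj : Disjoint ({v} : Set V) {w'} := by simpa using hvw
            have hndB : ¬ Dominates G ({w'} : Set V) := by
              intro hd
              obtain ⟨x, hx, hadj⟩ := hd v (fun h => hvw (Set.mem_singleton_iff.mp h))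
              rw [Set.mem_singleton_iff.mp hx] at hadj
              exact ((hadjchar w' v).mp hadj).2.1 rfl
            have hdun : Dominates G (({v} : Set V) ∪ {w'}) := by
              intro x hx
              simp only [Set.mem_union, Set.mem_singleton_iff] at hx
              push_neg at hx
              exact ⟨v, Or.inl rfl, (hadjchar v x).mpr ⟨fun h => hx.1 h.symm, hvw, hx.2⟩⟩
            exact ⟨hndom v u (Ne.symm huv), {w'}, hBmem, hBne, hdisj, hndom v u (Ne.symm huv), hndB, hdun⟩
    -- compute sSup
    have hmem : Fintype.card V ∈ {n | ∃ Q : Finset (Set V), IsCoalitionPartition G Q ∧ Q.card = n} :=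
      ⟨P, hP, hcard⟩
    apply le_antisymm
    · apply csSup_le ⟨_, hmem⟩
      rintro m ⟨Q, hQ, rfl⟩
      exact card_le_of_cp G hQ
    · refine le_csSup ⟨Fintype.card V, ?_⟩ hmem
      rintro m ⟨Q, hQ, rfl⟩
      exact card_le_of_cp G hQ
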